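/- Let u, v be continuous real functions on ℝ², u supported in the closed half-plane {x·ν ≥ a} and v supported in {x·ν' ≥ b} with |ν| = |ν'| = 1, u > 0 on {x·ν > a}, v > 0 on {x·ν' > b}, and u·v = 0 everywhere. If additionally the common zero set {u = 0} ∩ {v = 0} has empty interior, then ν' = −ν and b = −a; i.e., the supports are exactly complementary closed half-planes. -/
import Mathlib
open scoped RealInnerProductSpace

lemma key19 (a b : ℝ) (ν ν' : EuclideanSpace ℝ (Fin 2)) (hν : ‖ν‖ = 1) (hν' : ‖ν'‖ = 1)
    (h : ∀ x : EuclideanSpace ℝ (Fin 2), a < ⟪x, ν⟫ → ¬ (b < ⟪x, ν'⟫)) :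
    ν' = -ν ∧ -a ≤ b := by
  have hc : ⟪ν, ν'⟫ = -1 := by
    by_contra hne
    have hcs : |⟪ν, ν'⟫| ≤ 1 := by
      have := abs_real_inner_le_norm ν ν'
      rwa [hν, hν', one_mul] at this
    have hgt : -1 < ⟪ν, ν'⟫ := lt_of_le_of_ne (neg_le_of_abs_le hcs) (Ne.symm hne)
    have hpos : 0 < 1 + ⟪ν, ν'⟫ := by linarith
    set t := (max a b + 1) / (1 + ⟪ν, ν'⟫) with ht
    have h1 : ⟪t • (ν + ν'), ν⟫ = max a b + 1 := by
      rw [real_inner_smul_left, inner_add_left, real_inner_self_eq_norm_sq, hν, one_pow,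
        real_inner_comm ν ν', ht, div_mul_cancel₀ _ hpos.ne']
    have h2 : ⟪t • (ν + ν'), ν'⟫ = max a b + 1 := by
      rw [real_inner_smul_left, inner_add_left, real_inner_self_eq_norm_sq, hν', one_pow, ht,
        add_comm ⟪ν, ν'⟫ 1, div_mul_cancel₀ _ hpos.ne']
    have := h (t • (ν + ν')) (by rw [h1]; exact lt_of_le_of_lt (le_max_left a b) (by linarith))
    exact this (by rw [h2]; exact lt_of_le_of_lt (le_max_right a b) (by linarith))
  have hνν' : ν' = -ν := by
    have h1 : ⟪ν, -ν'⟫ = 1 := by rw [inner_neg_right, hc]; norm_num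
    have heq : ν = -ν' := by
      rwa [inner_eq_one_iff_of_norm_eq_one hν (by rw [norm_neg]; exact hν')] at h1
    rw [heq]; simp
  refine ⟨hνν', ?_⟩
  by_contra hab
  push_neg at hab
  set s := (a + -b) / 2 with hs
  have hsa : a < s := by rw [hs]; linarith
  have hsb : s < -b := by rw [hs]; linarith
  have h1 : ⟪s • ν, ν⟫ = s := by
    rw [real_inner_smul_left, real_inner_self_eq_norm_sq, hν]; ring
  have h2 : ⟪s • ν, ν'⟫ = -s := by
    rw [hνν', inner_neg_right, real_inner_smul_left, real_inner_self_eq_norm_sq, hν]; ring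
  exact h (s • ν) (by rw [h1]; exact hsa) (by rw [h2]; linarith)

theorem stmt19 (a b : ℝ) (ν ν' : EuclideanSpace ℝ (Fin 2)) (hν : ‖ν‖ = 1) (hν' : ‖ν'‖ = 1)
    (u v : EuclideanSpace ℝ (Fin 2) → ℝ) (hu : Continuous u) (hv : Continuous v)
    (hsu : Function.support u ⊆ {x | a ≤ ⟪x, ν⟫})
    (hsv : Function.support v ⊆ {x | b ≤ ⟪x, ν'⟫})
    (hupos : ∀ x, a < ⟪x, ν⟫ → 0 < u x)
    (hvpos : ∀ x, b < ⟪x, ν'⟫ → 0 < v x)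
    (huv : ∀ x, u x * v x = 0)
    (hint : interior ({x | u x = 0} ∩ {x | v x = 0}) = ∅) :
    ν' = -ν ∧ b = -a := by
  have h₁ : ∀ x : EuclideanSpace ℝ (Fin 2), a < ⟪x, ν⟫ → ¬ (b < ⟪x, ν'⟫) := by
    intro x hxa hxb
    exact absurd (huv x) (ne_of_gt (mul_pos (hupos x hxa) (hvpos x hxb)))
  have h₂ : ∀ x : EuclideanSpace ℝ (Fin 2), -a < ⟪x, -ν⟫ → ¬ (-b < ⟪x, -ν'⟫) := by
    intro x hxa hxb
    rw [inner_neg_right, neg_lt_neg_iff] at hxa hxb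
    have hopen : IsOpen {x : EuclideanSpace ℝ (Fin 2) | ⟪x, ν⟫ < a ∧ ⟪x, ν'⟫ < b} := by
      have hc1 : Continuous fun x : EuclideanSpace ℝ (Fin 2) => ⟪x, ν⟫ :=
        Continuous.inner continuous_id continuous_const
      have hc2 : Continuous fun x : EuclideanSpace ℝ (Fin 2) => ⟪x, ν'⟫ :=
        Continuous.inner continuous_id continuous_const
      exact IsOpen.inter (isOpen_lt hc1 continuous_const) (isOpen_lt hc2 continuous_const)
    have hsub : {x : EuclideanSpace ℝ (Fin 2) | ⟪x, ν⟫ < a ∧ ⟪x, ν'⟫ < b} ⊆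
        {x | u x = 0} ∩ {x | v x = 0} := by
      rintro y ⟨hy1, hy2⟩
      constructor
      · by_contra hne
        exact absurd (hsu hne) (not_le.mpr hy1)
      · by_contra hne
        exact absurd (hsv hne) (not_le.mpr hy2)
    have : x ∈ interior ({x | u x = 0} ∩ {x | v x = 0}) :=
      interior_maximal hsub hopen ⟨hxa, hxb⟩
    rw [hint] at this
    exact this
  obtain ⟨hd, hba⟩ := key19 a b ν ν' hν hν' h₁
  obtain ⟨-, hab⟩ := key19 (-a) (-b) (-ν) (-ν') (by rwa [norm_neg]) (by rwa [norm_neg]) h₂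
  exact ⟨hd, le_antisymm (by linarith) (by linarith)⟩
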